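/- Let I₁ ⊆ ℝ be an open interval and I₂ ⊆ ℝ a compact interval, and let g : I₁ × I₂ → ℝ be continuous such that g(·,y) is convex and ∂g/∂x exists for every (x,y). Define G(x) = max_{y ∈ I₂} g(x,y) and let Ω(x) be the set of maximizers. Then the one-sided derivatives of G satisfy (dG/dx+)(x) = max_{y ∈ Ω(x)} ∂g/∂x(x,y) and (dG/dx−)(x) = min_{y ∈ Ω(x)} ∂g/∂x(x,y). In particular, if Ω(x) is a singleton then G is differentiable at x. -/

import Mathlib

open Set Filter Topology

lemma danskin_aux (a b c d : ℝ) (hcd : c ≤ d)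
    (g g' : ℝ → ℝ → ℝ)
    (hcont : ContinuousOn (fun p : ℝ × ℝ => g p.1 p.2) (Set.Ioo a b ×ˢ Set.Icc c d))
    (hconv : ∀ y ∈ Set.Icc c d, ConvexOn ℝ (Set.Ioo a b) (fun x => g x y))
    (hderiv : ∀ x ∈ Set.Ioo a b, ∀ y ∈ Set.Icc c d,
      HasDerivAt (fun x' => g x' y) (g' x y) x)
    (G : ℝ → ℝ) (hG : ∀ x, G x = sSup (g x '' Set.Icc c d))
    (Om : ℝ → Set ℝ)
    (hOm : ∀ x, Om x = {y ∈ Set.Icc c d | ∀ z ∈ Set.Icc c d, g x z ≤ g x y}) :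
    ∀ x ∈ Set.Ioo a b, HasDerivWithinAt G (sSup (g' x '' Om x)) (Set.Ici x) x := by
  have hIccNe : (Icc c d).Nonempty := nonempty_Icc.2 hcd
  have contY : ∀ x' ∈ Ioo a b, ContinuousOn (g x') (Icc c d) := by
    intro x' hx'
    have h : ContinuousOn ((fun p : ℝ × ℝ => g p.1 p.2) ∘ (fun y => (x', y))) (Icc c d) :=
      hcont.comp (Continuous.continuousOn (by continuity)) (fun y hy => ⟨hx', hy⟩)
    exact h
  have omSub : ∀ x', Om x' ⊆ Icc c d := by
    intro x'; rw [hOm x']; exact fun y hy => hy.1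
  have omNe : ∀ x' ∈ Ioo a b, (Om x').Nonempty := by
    intro x' hx'
    obtain ⟨y, hy, hmax⟩ := isCompact_Icc.exists_isMaxOn hIccNe (contY x' hx')
    exact ⟨y, by rw [hOm x']; exact ⟨hy, fun z hz => hmax hz⟩⟩
  have hGeq : ∀ x' ∈ Ioo a b, ∀ y ∈ Om x', G x' = g x' y := by
    intro x' hx' y hy
    rw [hOm x'] at hy
    rw [hG]
    refine IsGreatest.csSup_eq ⟨⟨y, hy.1, rfl⟩, ?_⟩
    rintro v ⟨z, hz, rfl⟩
    exact hy.2 z hz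
  have hGge : ∀ x' ∈ Ioo a b, ∀ z ∈ Icc c d, g x' z ≤ G x' := by
    intro x' hx' z hz
    obtain ⟨y, hy⟩ := omNe x' hx'
    rw [hGeq x' hx' y hy]
    rw [hOm x'] at hy
    exact hy.2 z hz
  have omClosed : ∀ x' ∈ Ioo a b, IsClosed (Om x') := by
    intro x' hx'
    have h1 : Om x' = Icc c d ∩ (g x') ⁻¹' (Ici (G x')) := by
      ext y
      rw [hOm x']
      constructor
      · rintro ⟨hy, hmax⟩
        exact ⟨hy, le_of_eq (hGeq x' hx' y (by rw [hOm x']; exact ⟨hy, hmax⟩))⟩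
      · rintro ⟨hy, hge⟩
        exact ⟨hy, fun z hz => (hGge x' hx' z hz).trans hge⟩
    rw [h1]
    exact (contY x' hx').preimage_isClosed_of_isClosed isClosed_Icc isClosed_Ici
  have omCompact : ∀ x' ∈ Ioo a b, IsCompact (Om x') :=
    fun x' hx' => isCompact_Icc.of_isClosed_subset (omClosed x' hx') (omSub x')
  intro x hx
  obtain ⟨hax, hxb⟩ := hx
  have hx : x ∈ Ioo a b := ⟨hax, hxb⟩
  set φ : ℝ → ℝ → ℝ := fun w y => (g w y - g x y) / (w - x) with hφ
  have derivLe : ∀ y ∈ Icc c d, ∀ w ∈ Ioo a b, x < w → g' x y ≤ φ w y := by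
    intro y hy w hw hxw
    have h := (hconv y hy).le_slope_of_hasDerivAt hx hw hxw (hderiv x hx y hy)
    rwa [slope_def_field] at h
  have slopeMono : ∀ y ∈ Icc c d, ∀ w₁ ∈ Ioo a b, ∀ w₂ ∈ Ioo a b,
      x < w₁ → w₁ ≤ w₂ → φ w₁ y ≤ φ w₂ y := by
    intro y hy w₁ hw₁ w₂ hw₂ hxw₁ hw₁₂
    have h := (hconv y hy).slope_mono hx (⟨hw₁, by simpa using hxw₁.ne'⟩ : w₁ ∈ Ioo a b \ {x})
      (⟨hw₂, by simpa using (hxw₁.trans_le hw₁₂).ne'⟩ : w₂ ∈ Ioo a b \ {x}) hw₁₂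
    rwa [slope_def_field, slope_def_field] at h
  have contφ : ∀ w ∈ Ioo a b, ContinuousOn (φ w) (Icc c d) := by
    intro w hw
    exact ((contY w hw).sub (contY x hx)).div_const _
  obtain ⟨hw₀I, hxw₀⟩ : (x + b)/2 ∈ Ioo a b ∧ x < (x + b)/2 :=
    ⟨⟨by linarith, by linarith⟩, by linarith⟩
  set w₀ := (x + b)/2 with hw₀
  obtain ⟨yb, hyb, hybMax⟩ := isCompact_Icc.exists_isMaxOn hIccNe (contφ w₀ hw₀I)
  have bdd : BddAbove (g' x '' Om x) := by
    refine ⟨φ w₀ yb, ?_⟩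
    rintro v ⟨y, hy, rfl⟩
    exact (derivLe y (omSub x hy) w₀ hw₀I hxw₀).trans (hybMax (omSub x hy))
  set S := sSup (g' x '' Om x) with hS
  have imgNe : (g' x '' Om x).Nonempty := (omNe x hx).image _
  have lower : ∀ w ∈ Ioo a b, x < w → S ≤ (G w - G x) / (w - x) := by
    intro w hw hxw
    refine csSup_le imgNe ?_
    rintro v ⟨y, hy, rfl⟩
    have h1 : g' x y ≤ φ w y := derivLe y (omSub x hy) w hw hxw
    have h2 : φ w y ≤ (G w - G x) / (w - x) := by
      have hGx : G x = g x y := hGeq x hx y hy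
      have hGw : g w y ≤ G w := hGge w hw y (omSub x hy)
      rw [hφ]
      have hwx : (0:ℝ) < w - x := by linarith
      exact (div_le_div_iff_of_pos_right hwx).2 (by linarith)
    exact h1.trans h2
  have upper : ∀ ε > 0, ∃ δ > 0, ∀ w ∈ Ioo a b, x < w → w < x + δ →
      (G w - G x) / (w - x) < S + ε := by
    intro ε hε
    -- Step A: a point u > x where the slope function is < S + ε on all of Om x
    obtain ⟨u, huI, hxu, huA⟩ : ∃ u, u ∈ Ioo a b ∧ x < u ∧ ∀ y ∈ Om x, φ u y < S + ε := by
      by_contra hcon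
      push_neg at hcon
      set t : ℕ → ℝ := fun n => x + (w₀ - x) / (n + 1) with ht
      have hpos : ∀ n : ℕ, 0 < (w₀ - x) / ((n : ℝ) + 1) := by
        intro n
        apply div_pos (by linarith)
        positivity
      have hxt : ∀ n, x < t n := by
        intro n
        have := hpos n
        simp only [ht]
        linarith
      have htle : ∀ n : ℕ, (w₀ - x) / ((n : ℝ) + 1) ≤ w₀ - x := by
        intro n
        apply div_le_self (by linarith)
        have : (0:ℝ) ≤ (n : ℝ) := Nat.cast_nonneg n
        linarith
      have htI : ∀ n, t n ∈ Ioo a b := by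
        intro n
        refine ⟨lt_trans hax (hxt n), ?_⟩
        have h1 := htle n
        have h2 := hw₀I.2
        simp only [ht]
        linarith
      have htmono : ∀ n : ℕ, t (n + 1) ≤ t n := by
        intro n
        have : (w₀ - x) / ((n : ℝ) + 1 + 1) ≤ (w₀ - x) / ((n : ℝ) + 1) := by
          apply div_le_div_of_nonneg_left (by linarith) (by positivity) (by linarith)
        simp only [ht]
        push_cast
        linarith
      set K : ℕ → Set ℝ := fun n => {y ∈ Om x | S + ε ≤ φ (t n) y} with hK
      have hKcl : ∀ n, IsClosed (K n) := by
        intro n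
        have heq : K n = Om x ∩ (φ (t n)) ⁻¹' (Ici (S + ε)) := by
          ext y
          simp only [hK, mem_sep_iff, mem_inter_iff, mem_preimage, mem_Ici]
        rw [heq]
        exact ContinuousOn.preimage_isClosed_of_isClosed
          ((contφ (t n) (htI n)).mono (omSub x)) (omClosed x hx) isClosed_Ici
      have hKcomp : ∀ n, IsCompact (K n) := fun n =>
        (omCompact x hx).of_isClosed_subset (hKcl n) (fun y hy => hy.1)
      have hKanti : Antitone K := by
        refine antitone_nat_of_succ_le ?_
        intro n y hy
        refine ⟨hy.1, le_trans hy.2 ?_⟩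
        exact slopeMono y (omSub x hy.1) (t (n+1)) (htI _) (t n) (htI _) (hxt _) (htmono n)
      have hKne : ∀ n, (K n).Nonempty := by
        intro n
        obtain ⟨y, hyOm, hyge⟩ := hcon (t n) (htI n) (hxt n)
        exact ⟨y, hyOm, hyge⟩
      obtain ⟨y, hy⟩ := IsCompact.nonempty_iInter_of_directed_nonempty_isCompact_isClosed
        K hKanti.directed_ge hKne hKcomp hKcl
      have hyK : ∀ n, y ∈ K n := fun n => mem_iInter.1 hy n
      have hyOm : y ∈ Om x := (hyK 0).1
      have httx : Tendsto t atTop (𝓝[≠] x) := by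
        apply tendsto_nhdsWithin_of_tendsto_nhds_of_eventually_within
        · have h0 : Tendsto (fun n : ℕ => (w₀ - x) / ((n : ℝ) + 1)) atTop (𝓝 0) := by
            have h := tendsto_one_div_add_atTop_nhds_zero_nat.const_mul (w₀ - x)
            simpa [div_eq_mul_inv, one_div] using h
          have h1 : Tendsto t atTop (𝓝 (x + 0)) := tendsto_const_nhds.add h0
          simpa using h1
        · exact Eventually.of_forall (fun n => (hxt n).ne')
      have hylim : Tendsto (fun n => φ (t n) y) atTop (𝓝 (g' x y)) := by
        have hslope := hasDerivAt_iff_tendsto_slope.1 (hderiv x hx y (omSub x hyOm))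
        have hcomp := hslope.comp httx
        have : (fun n => slope (fun x' => g x' y) x (t n)) = fun n => φ (t n) y := by
          funext n
          rw [slope_def_field]
        rwa [Function.comp_def, this] at hcomp
      have h1 : S + ε ≤ g' x y :=
        ge_of_tendsto hylim (Eventually.of_forall (fun n => (hyK n).2))
      have h2 : g' x y ≤ S := le_csSup bdd ⟨y, hyOm, rfl⟩
      linarith
    -- Step B: upper semicontinuity of Om
    obtain ⟨δ, hδpos, hδ⟩ : ∃ δ > 0, ∀ w ∈ Ioo a b, |w - x| < δ →
        ∀ y ∈ Om w, φ u y < S + ε := by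
      by_contra hcon
      push_neg at hcon
      have hsel : ∀ n : ℕ, ∃ w, w ∈ Ioo a b ∧ |w - x| < 1/((n:ℝ)+1) ∧
          ∃ y, y ∈ Om w ∧ S + ε ≤ φ u y := by
        intro n
        obtain ⟨w, hwI, hwd, y, hyOm, hyge⟩ := hcon (1/((n:ℝ)+1)) (by positivity)
        exact ⟨w, hwI, hwd, y, hyOm, hyge⟩
      choose w hwI hwd y hyOm hyge using hsel
      set C := {y' ∈ Icc c d | S + ε ≤ φ u y'} with hC
      have hCcl : IsClosed C := by
        have heq : C = Icc c d ∩ (φ u) ⁻¹' (Ici (S + ε)) := by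
          ext y'
          simp only [hC, mem_sep_iff, mem_inter_iff, mem_preimage, mem_Ici]
        rw [heq]
        exact ContinuousOn.preimage_isClosed_of_isClosed (contφ u huI) isClosed_Icc isClosed_Ici
      have hCcomp : IsCompact C := isCompact_Icc.of_isClosed_subset hCcl (fun y' hy' => hy'.1)
      have hyC : ∀ n, y n ∈ C := fun n => ⟨omSub _ (hyOm n), hyge n⟩
      obtain ⟨ys, hysC, σ, hσ, hyconv⟩ := hCcomp.tendsto_subseq hyC
      have hwlim : Tendsto w atTop (𝓝 x) := by
        have hsq : Tendsto (fun n : ℕ => |w n - x|) atTop (𝓝 0) :=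
          squeeze_zero (fun n => abs_nonneg _) (fun n => (hwd n).le)
            tendsto_one_div_add_atTop_nhds_zero_nat
        rw [tendsto_iff_dist_tendsto_zero]
        simpa [Real.dist_eq] using hsq
      have hwσ : Tendsto (fun n => w (σ n)) atTop (𝓝 x) := hwlim.comp hσ.tendsto_atTop
      have hysOm : ys ∈ Om x := by
        rw [hOm x]
        refine ⟨hysC.1, fun z hz => ?_⟩
        have hz1 : Tendsto (fun n => g (w (σ n)) z) atTop (𝓝 (g x z)) := by
          have hcw := (hcont (x, z) ⟨hx, hz⟩).tendsto
          have hmm := tendsto_nhdsWithin_of_tendsto_nhds_of_eventually_within (s := Ioo a b ×ˢ Icc c d)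
            (fun n => (w (σ n), z)) (hwσ.prodMk_nhds tendsto_const_nhds)
            (Eventually.of_forall (fun n => ⟨hwI (σ n), hz⟩))
          simpa [Function.comp_def] using hcw.comp hmm
        have hz2 : Tendsto (fun n => g (w (σ n)) (y (σ n))) atTop (𝓝 (g x ys)) := by
          have hcw := (hcont (x, ys) ⟨hx, hysC.1⟩).tendsto
          have hmm := tendsto_nhdsWithin_of_tendsto_nhds_of_eventually_within (s := Ioo a b ×ˢ Icc c d)
            (fun n => (w (σ n), y (σ n))) (hwσ.prodMk_nhds hyconv)
            (Eventually.of_forall (fun n => ⟨hwI (σ n), omSub _ (hyOm (σ n))⟩))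
          simpa [Function.comp_def] using hcw.comp hmm
        refine le_of_tendsto_of_tendsto' hz1 hz2 (fun n => ?_)
        have hm := hyOm (σ n)
        rw [hOm] at hm
        exact hm.2 z hz
      have hc1 := huA ys hysOm
      have hc2 := hysC.2
      linarith
    -- Step C: conclude
    refine ⟨min δ (u - x), lt_min hδpos (by linarith), ?_⟩
    intro w hwI hxw hwlt
    obtain ⟨yw, hywOm⟩ := omNe w hwI
    have hywIcc := omSub w hywOm
    have hwu : w ≤ u := by
      have := min_le_right δ (u - x)
      linarith
    have h1 : (G w - G x) / (w - x) ≤ φ w yw := by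
      have hGw : G w = g w yw := hGeq w hwI yw hywOm
      have hGx : g x yw ≤ G x := hGge x hx yw hywIcc
      have hwx : (0:ℝ) < w - x := by linarith
      exact (div_le_div_iff_of_pos_right hwx).2 (by linarith)
    have h2 : φ w yw ≤ φ u yw := slopeMono yw hywIcc w hwI u huI hxw hwu
    have h3 : φ u yw < S + ε := by
      refine hδ w hwI ?_ yw hywOm
      rw [abs_of_pos (by linarith)]
      have := min_le_left δ (u - x)
      linarith
    linarith
  rw [hasDerivWithinAt_iff_tendsto_slope, Set.Ici_sdiff_left, tendsto_order]
  constructor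
  · intro l hl
    have hmem : Ioo x b ∈ 𝓝[>] x := Ioo_mem_nhdsGT_of_mem ⟨le_refl x, hxb⟩
    filter_upwards [hmem] with w hw
    have := lower w ⟨lt_trans hax hw.1, hw.2⟩ hw.1
    rw [slope_def_field]
    linarith
  · intro v hv
    obtain ⟨δ, hδpos, hδ⟩ := upper (v - S) (by linarith)
    have hmem : Ioo x (min (x+δ) b) ∈ 𝓝[>] x :=
      Ioo_mem_nhdsGT_of_mem ⟨le_refl x, lt_min (by linarith) hxb⟩
    filter_upwards [hmem] with w hw
    rw [slope_def_field]
    have h := hδ w ⟨lt_trans hax hw.1, lt_of_lt_of_le hw.2 (min_le_right _ _)⟩ hw.1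
      (lt_of_lt_of_le hw.2 (min_le_left _ _))
    linarith

theorem danskin (a b c d : ℝ) (hcd : c ≤ d)
    (g g' : ℝ → ℝ → ℝ)
    (hcont : ContinuousOn (fun p : ℝ × ℝ => g p.1 p.2) (Set.Ioo a b ×ˢ Set.Icc c d))
    (hconv : ∀ y ∈ Set.Icc c d, ConvexOn ℝ (Set.Ioo a b) (fun x => g x y))
    (hderiv : ∀ x ∈ Set.Ioo a b, ∀ y ∈ Set.Icc c d,
      HasDerivAt (fun x' => g x' y) (g' x y) x)
    (G : ℝ → ℝ) (hG : ∀ x, G x = sSup (g x '' Set.Icc c d))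
    (Om : ℝ → Set ℝ)
    (hOm : ∀ x, Om x = {y ∈ Set.Icc c d | ∀ z ∈ Set.Icc c d, g x z ≤ g x y}) :
    ∀ x ∈ Set.Ioo a b,
      HasDerivWithinAt G (sSup (g' x '' Om x)) (Set.Ici x) x ∧
      HasDerivWithinAt G (sInf (g' x '' Om x)) (Set.Iic x) x ∧
      ∀ y₀, Om x = {y₀} → HasDerivAt G (g' x y₀) x := by
  intro x hx
  have hright := danskin_aux a b c d hcd g g' hcont hconv hderiv G hG Om hOm x hx
  -- left derivative via reflection
  have hleft : HasDerivWithinAt G (sInf (g' x '' Om x)) (Set.Iic x) x := by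
    have hcont' : ContinuousOn (fun p : ℝ × ℝ => g (-p.1) p.2)
        (Set.Ioo (-b) (-a) ×ˢ Set.Icc c d) := by
      have hmap : Set.MapsTo (fun p : ℝ × ℝ => (-p.1, p.2))
          (Set.Ioo (-b) (-a) ×ˢ Set.Icc c d) (Set.Ioo a b ×ˢ Set.Icc c d) := by
        rintro ⟨p1, p2⟩ ⟨⟨h1, h2⟩, h3⟩
        simp only [Set.mem_prod, Set.mem_Ioo] at *
        exact ⟨⟨by linarith, by linarith⟩, h3⟩
      exact hcont.comp (Continuous.continuousOn (by continuity)) hmap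
    have hconv' : ∀ y ∈ Set.Icc c d, ConvexOn ℝ (Set.Ioo (-b) (-a)) (fun x => g (-x) y) := by
      intro y hy
      refine ⟨convex_Ioo _ _, ?_⟩
      intro x₁ hx₁ x₂ hx₂ p q hp hq hpq
      have h1 : -x₁ ∈ Set.Ioo a b := ⟨by simpa using neg_lt_neg hx₁.2, by simpa using neg_lt_neg hx₁.1⟩
      have h2 : -x₂ ∈ Set.Ioo a b := ⟨by simpa using neg_lt_neg hx₂.2, by simpa using neg_lt_neg hx₂.1⟩
      have h := (hconv y hy).2 h1 h2 hp hq hpq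
      have heq : p • (-x₁) + q • (-x₂) = -(p • x₁ + q • x₂) := by
        simp only [smul_eq_mul]; ring
      rw [heq] at h
      exact h
    have hderiv' : ∀ u ∈ Set.Ioo (-b) (-a), ∀ y ∈ Set.Icc c d,
        HasDerivAt (fun u' => g (-u') y) (-(g' (-u) y)) u := by
      intro u hu y hy
      have humem : -u ∈ Set.Ioo a b := ⟨by simpa using neg_lt_neg hu.2, by simpa using neg_lt_neg hu.1⟩
      have h := (hderiv (-u) humem y hy).comp u (hasDerivAt_neg u)
      simpa [Function.comp_def, mul_comm] using h
    have key := danskin_aux (-b) (-a) c d hcd (fun u y => g (-u) y) (fun u y => -(g' (-u) y))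
      hcont' hconv' hderiv' (fun u => G (-u)) (fun u => hG (-u)) (fun u => Om (-u))
      (fun u => hOm (-u)) (-x) ⟨neg_lt_neg hx.2, neg_lt_neg hx.1⟩
    simp only [neg_neg] at key
    have himg : (fun y => -(g' x y)) '' Om x = -(g' x '' Om x) := by
      ext v
      simp only [Set.mem_image, Set.mem_neg]
      constructor
      · rintro ⟨y, hy, rfl⟩; exact ⟨y, hy, by ring⟩
      · rintro ⟨y, hy, h⟩; exact ⟨y, hy, by rw [h]; ring⟩
    rw [himg] at key
    have hsup : sSup (-(g' x '' Om x)) = -sInf (g' x '' Om x) := by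
      rw [Real.sInf_def, neg_neg]
    rw [hsup] at key
    have hmap : Set.MapsTo (fun w : ℝ => -w) (Set.Iic x) (Set.Ici (-x)) :=
      fun w hw => mem_Ici.2 (neg_le_neg (mem_Iic.1 hw))
    have hcomp := HasDerivWithinAt.comp x key ((hasDerivAt_neg x).hasDerivWithinAt) hmap
    have : ((fun u => G (-u)) ∘ fun w : ℝ => -w) = G := by
      funext w; simp [Function.comp_def]
    rw [this] at hcomp
    simpa using hcomp
  refine ⟨hright, hleft, ?_⟩
  intro y₀ hy₀
  have himg : g' x '' Om x = {g' x y₀} := by rw [hy₀, Set.image_singleton]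
  have h1 : sSup (g' x '' Om x) = g' x y₀ := by rw [himg, csSup_singleton]
  have h2 : sInf (g' x '' Om x) = g' x y₀ := by rw [himg, csInf_singleton]
  rw [h1] at hright
  rw [h2] at hleft
  have := hright.union hleft
  rw [show Set.Ici x ∪ Set.Iic x = Set.univ from by ext w; simp [le_total x w]] at this
  rw [← hasDerivWithinAt_univ]
  exact this
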